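/- Let X be a topological space, G a group, and X = ⋃_{i∈I} U_i an open cover. Suppose for each i a map φ_i from the fundamental groupoid π(U_i) to G is given which is multiplicative under concatenation, invariant under fixed-endpoint homotopy, and such that φ_i([γ]) = φ_j([γ]) whenever γ is a path in U_i ∩ U_j. Then there exists a unique map φ : π(X) → G, multiplicative under concatenation and invariant under fixed-endpoint homotopies, such that φ([γ]) = φ_i([γ]) for every path γ with image in U_i. -/

import Mathlib

section VKAux
open Set unitInterval

def HomotopicIn {X : Type*} [TopologicalSpace X] (S : Set X) {x y : X}
    (γ γ' : Path x y) : Prop :=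
  ∃ H : Path.Homotopy γ γ', ∀ p : unitInterval × unitInterval, H p ∈ S

section aux
variable {X : Type*} [TopologicalSpace X]

theorem HomotopicIn.mono {S S' : Set X} {x y : X} {γ γ' : Path x y}
    (h : HomotopicIn S γ γ') (hS : S ⊆ S') : HomotopicIn S' γ γ' :=
  ⟨h.choose, fun p => hS (h.choose_spec p)⟩

theorem HomotopicIn.homotopic {S : Set X} {x y : X} {γ γ' : Path x y}
    (h : HomotopicIn S γ γ') : γ.Homotopic γ' := ⟨h.choose⟩

theorem path_congr {G : Sort*} (f : ∀ x y : X, Path x y → G) {a b a' b' : X}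
    (ha : a = a') (hb : b = b') {p : Path a b} {q : Path a' b'} (h : ∀ t, p t = q t) :
    f a b p = f a' b' q := by
  subst ha; subst hb
  have : p = q := by ext t; exact h t
  rw [this]

variable {E : Type*} [AddCommGroup E] [Module ℝ E] [TopologicalSpace E]
  [IsTopologicalAddGroup E] [ContinuousSMul ℝ E]

/-- The straight-line path between two points of a real topological vector space. -/
def lineP (a b : E) : Path a b where
  toFun t := (1 - (t : ℝ)) • a + (t : ℝ) • b
  continuous_toFun := by
    exact ((continuous_const.sub continuous_subtype_val).smul continuous_const).add
      (continuous_subtype_val.smul continuous_const)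
  source' := by simp
  target' := by simp

theorem lineP_apply (a b : E) (t : I) : lineP a b t = (1 - (t : ℝ)) • a + (t : ℝ) • b := rfl

theorem lineP_mem {K : Set E} (hK : Convex ℝ K) {a b : E} (ha : a ∈ K) (hb : b ∈ K) (t : I) :
    lineP a b t ∈ K :=
  hK ha hb (sub_nonneg.2 t.2.2) t.2.1 (by ring)

/-- The key construction: two paths which are compositions of `F` with paths into a convex
set `K` with common endpoints are homotopic within `F '' K`. -/
theorem homotopicIn_comp (F : C(E, X)) {K : Set E} (hK : Convex ℝ K)
    {a b : E} (p q : Path a b) (hp : ∀ t, p t ∈ K) (hq : ∀ t, q t ∈ K)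
    {u w : X} (A B : Path u w) (hA : ∀ t, A t = F (p t)) (hB : ∀ t, B t = F (q t)) :
    HomotopicIn (F '' K) A B := by
  have key : ∀ (s : I) (c : E), F ((1 - (s : ℝ)) • c + (s : ℝ) • c) = F c := by
    intro s c; congr 1; rw [← add_smul]; simp
  refine ⟨{ toFun := fun z => F ((1 - (z.1 : ℝ)) • p z.2 + (z.1 : ℝ) • q z.2)
            continuous_toFun := F.continuous.comp
              (((continuous_const.sub (continuous_subtype_val.comp continuous_fst)).smul
                (p.continuous.comp continuous_snd)).add
              ((continuous_subtype_val.comp continuous_fst).smul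
                (q.continuous.comp continuous_snd)))
            map_zero_left := by intro t; simp [hA t]
            map_one_left := by intro t; simp [hB t]
            prop' := ?_ }, ?_⟩
  · intro s t ht
    simp only [Set.mem_insert_iff, Set.mem_singleton_iff] at ht
    obtain rfl | rfl := ht
    · show F ((1 - (s : ℝ)) • p 0 + (s : ℝ) • q 0) = A 0
      rw [p.source, q.source, key, hA 0, p.source]
    · show F ((1 - (s : ℝ)) • p 1 + (s : ℝ) • q 1) = A 1
      rw [p.target, q.target, key, hA 1, p.target]
  · intro z
    exact ⟨_, hK (hp z.2) (hq z.2) (sub_nonneg.2 z.1.2.2) z.1.2.1 (by ring), rfl⟩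

end aux
section seg
variable {X : Type*} [TopologicalSpace X]

/-- `γ.extend` as a continuous map `ℝ → X`. -/
noncomputable def GG {x y : X} (γ : Path x y) : C(ℝ, X) := ⟨γ.extend, γ.continuous_extend⟩

/-- The (affinely reparametrized) piece of `γ` between times `s` and `t`. -/
noncomputable def seg {x y : X} (γ : Path x y) (s t : ℝ) : Path (γ.extend s) (γ.extend t) :=
  (lineP s t).map (GG γ).continuous

theorem seg_apply {x y : X} (γ : Path x y) (s t : ℝ) (u : I) :
    seg γ s t u = γ.extend ((1 - (u : ℝ)) * s + (u : ℝ) * t) := rfl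

theorem seg_comp {x y : X} (γ : Path x y) (s t : ℝ) :
    ∀ u, seg γ s t u = GG γ (lineP s t u) := fun _ => rfl

theorem seg_mem_Icc {x y : X} (γ : Path x y) {A B s t : ℝ} (hs : s ∈ Set.Icc A B)
    (ht : t ∈ Set.Icc A B) (u : I) : seg γ s t u ∈ γ.extend '' Set.Icc A B :=
  ⟨lineP s t u, lineP_mem (convex_Icc A B) hs ht u, rfl⟩

theorem seg_range {x y : X} (γ : Path x y) {A B s t : ℝ} (hs : s ∈ Set.Icc A B)
    (ht : t ∈ Set.Icc A B) : Set.range (seg γ s t) ⊆ γ.extend '' Set.Icc A B := by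
  rintro _ ⟨u, rfl⟩; exact seg_mem_Icc γ hs ht u

theorem seg_piece_congr {G : Sort*} {x y : X} (f : ∀ a b : X, Path a b → G) (γ : Path x y)
    {s t s' t' : ℝ} (hs : s = s') (ht : t = t') :
    f _ _ (seg γ s t) = f _ _ (seg γ s' t') := by subst hs; subst ht; rfl

theorem trans_comp {E : Type*} [AddCommGroup E] [Module ℝ E] [TopologicalSpace E]
    [IsTopologicalAddGroup E] [ContinuousSMul ℝ E]
    {u w v : X} (P : Path u w) (Q : Path w v) {a b c : E} (pE : Path a b) (qE : Path b c)
    (F : C(E, X)) (hP : ∀ t, P t = F (pE t)) (hQ : ∀ t, Q t = F (qE t)) :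
    ∀ t, (P.trans Q) t = F ((pE.trans qE) t) := by
  intro t
  rw [Path.trans_apply, Path.trans_apply]
  split_ifs
  · exact hP _
  · exact hQ _

theorem symm_comp {E : Type*} [AddCommGroup E] [Module ℝ E] [TopologicalSpace E]
    [IsTopologicalAddGroup E] [ContinuousSMul ℝ E]
    {u w : X} (P : Path u w) {a b : E} (pE : Path a b)
    (F : C(E, X)) (hP : ∀ t, P t = F (pE t)) :
    ∀ t, (P.symm) t = F ((pE.symm) t) := fun t => hP _

theorem self_comp {x y : X} (γ : Path x y) : ∀ t, γ t = GG γ (lineP (0:ℝ) 1 t) := by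
  intro t
  show γ t = γ.extend ((1 - (t:ℝ)) * 0 + (t:ℝ) * 1)
  rw [show (1 - (t:ℝ)) * 0 + (t:ℝ) * 1 = (t:ℝ) by ring, Path.extend_apply γ t.2,
    Subtype.coe_eta]

theorem refl_comp {x y z : X} (γ : Path x y) (s : ℝ) (h : γ.extend s = z) :
    ∀ t, (Path.refl z) t = GG γ (lineP s s t) := by
  intro t
  show z = γ.extend ((1 - (t:ℝ)) * s + (t:ℝ) * s)
  rw [show (1 - (t:ℝ)) * s + (t:ℝ) * s = s by ring, h]

end seg

section grp
variable {G : Type*} [Group G]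

/-- Ordered product `g 0 * g 1 * ⋯ * g (n-1)`. -/
def prodG (g : ℕ → G) : ℕ → G
  | 0 => 1
  | n + 1 => prodG g n * g n

theorem prodG_congr {g h : ℕ → G} : ∀ {n : ℕ}, (∀ k, k < n → g k = h k) →
    prodG g n = prodG h n
  | 0, _ => rfl
  | n + 1, H => by
      rw [prodG, prodG, prodG_congr (fun k hk => H k (hk.trans (Nat.lt_succ_self n))),
        H n (Nat.lt_succ_self n)]

theorem prodG_add (g : ℕ → G) (p : ℕ) : ∀ q, prodG g (p + q) = prodG g p * prodG (fun k => g (p + k)) q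
  | 0 => by simp [prodG]
  | q + 1 => by rw [← Nat.add_assoc, prodG, prodG, prodG_add g p q, mul_assoc]

theorem prodG_telescope {A A' B T : ℕ → G} {n : ℕ} (hn : 1 ≤ n)
    (hsq : ∀ k, k < n → B k = A k * T k * (A' k)⁻¹)
    (hco : ∀ k, k + 1 < n → A' k = A (k + 1))
    (h0 : A 0 = 1) (hl : A' (n - 1) = 1) :
    prodG B n = prodG T n := by
  have main : ∀ m, 1 ≤ m → m ≤ n → prodG B m = A 0 * prodG T m * (A' (m - 1))⁻¹ := by
    intro m
    induction m with
    | zero => omega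
    | succ m ih =>
      intro _ hmn
      rcases Nat.eq_or_lt_of_le (Nat.one_le_iff_ne_zero.mpr (by omega) : 1 ≤ m + 1) with h1 | h1
      · -- m = 0
        have hm0 : m = 0 := by omega
        subst hm0
        show prodG B 1 = A 0 * prodG T 1 * (A' 0)⁻¹
        rw [show (1:ℕ) = 0 + 1 from rfl]
        rw [prodG, prodG, prodG, prodG]
        rw [hsq 0 (by omega)]
        group
      · have hm1 : 1 ≤ m := by omega
        rw [prodG, ih hm1 (by omega), hsq m (by omega),
          show m + 1 - 1 = m from rfl]
        have : A' (m - 1) = A m := by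
          have := hco (m - 1) (by omega)
          rwa [show m - 1 + 1 = m by omega] at this
        rw [this, prodG]
        group
  have := main n hn (le_refl n)
  rw [h0, hl] at this
  simpa using this

end grp
section vk
variable {X : Type*} [TopologicalSpace X] {G : Type*} [Group G] {ι : Type*}
variable (U : ι → Set X) (φ : (i : ι) → (x y : X) → Path x y → G)

/-- Homotopy invariance hypothesis. -/
def VKHom : Prop :=
  ∀ i, ∀ (x y : X) (γ γ' : Path x y), Set.range ⇑γ ⊆ U i →
      Set.range ⇑γ' ⊆ U i → HomotopicIn (U i) γ γ' → φ i x y γ = φ i x y γ'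

/-- Multiplicativity hypothesis. -/
def VKMul : Prop :=
  ∀ i, ∀ (x y z : X) (γ : Path x y) (μ : Path y z), Set.range ⇑γ ⊆ U i →
      Set.range ⇑μ ⊆ U i → φ i x z (γ.trans μ) = φ i x y γ * φ i y z μ

/-- Compatibility hypothesis. -/
def VKCompat : Prop :=
  ∀ i j, ∀ (x y : X) (γ : Path x y), Set.range ⇑γ ⊆ U i ∩ U j →
      φ i x y γ = φ j x y γ

variable {U φ}

theorem phi_refl (hm : VKMul U φ) (hh : VKHom U φ) (i : ι) {z : X} (hz : z ∈ U i) :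
    φ i z z (Path.refl z) = 1 := by
  have hr : Set.range ⇑(Path.refl z) ⊆ U i := by
    rw [Path.refl_range]; exact Set.singleton_subset_iff.2 hz
  have h2 : φ i z z ((Path.refl z).trans (Path.refl z)) = φ i z z (Path.refl z) := by
    apply hh i z z ((Path.refl z).trans (Path.refl z)) (Path.refl z)
      (by rw [Path.trans_range]; exact Set.union_subset hr hr) hr
    · refine ⟨{ toFun := fun _ => z
                continuous_toFun := continuous_const
                map_zero_left := fun t => ?_
                map_one_left := fun _ => rfl
                prop' := fun s t _ => ?_ }, fun _ => hz⟩
      · show z = ((Path.refl z).trans (Path.refl z)) t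
        rw [Path.trans_apply]; split_ifs <;> rfl
      · show z = ((Path.refl z).trans (Path.refl z)) t
        rw [Path.trans_apply]; split_ifs <;> rfl
  rw [hm i z z z _ _ hr hr] at h2
  exact mul_left_cancel (a := φ i z z (Path.refl z)) (by rw [mul_one]; exact h2)

theorem phi_const (hm : VKMul U φ) (hh : VKHom U φ) (i : ι) {u w : X} (p : Path u w)
    {z : X} (hz : z ∈ U i) (hp : ∀ t, p t = z) : φ i u w p = 1 := by
  have hu : u = z := by rw [← p.source]; exact hp 0
  have hw : w = z := by rw [← p.target]; exact hp 1
  have h : φ i u w p = φ i z z (Path.refl z) :=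
    path_congr (φ i) hu hw (fun t => by rw [hp t]; rfl)
  rw [h]
  exact phi_refl hm hh i hz

theorem phi_symm (hm : VKMul U φ) (hh : VKHom U φ) (i : ι) {u w : X} (p : Path u w)
    (hp : Set.range ⇑p ⊆ U i) : φ i w u p.symm = (φ i u w p)⁻¹ := by
  have hps : Set.range ⇑p.symm ⊆ U i := by rw [Path.symm_range]; exact hp
  have hu : u ∈ U i := hp ⟨0, p.source⟩
  -- p.trans p.symm is homotopic to refl within U i
  have hcomp1 : ∀ t, (p.trans p.symm) t = GG p (((lineP (0:ℝ) 1).trans ((lineP (0:ℝ) 1).symm)) t) :=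
    trans_comp p p.symm (lineP (0:ℝ) 1) ((lineP (0:ℝ) 1).symm) (GG p) (self_comp p)
      (symm_comp p (lineP (0:ℝ) 1) (GG p) (self_comp p))
  have hcomp2 : ∀ t, (Path.refl u) t = GG p ((lineP (0:ℝ) 0) t) :=
    refl_comp p 0 p.extend_zero
  have hIcc : (0:ℝ) ∈ Set.Icc (0:ℝ) 1 := Set.left_mem_Icc.2 zero_le_one
  have hIcc1 : (1:ℝ) ∈ Set.Icc (0:ℝ) 1 := Set.right_mem_Icc.2 zero_le_one
  have hhtp : HomotopicIn (p.extend '' Set.Icc (0:ℝ) 1) (p.trans p.symm) (Path.refl u) := by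
    apply homotopicIn_comp (GG p) (convex_Icc (0:ℝ) 1) _ _ _ _ _ _ hcomp1 hcomp2
    · intro t
      have := Path.trans_range (lineP (0:ℝ) 1) ((lineP (0:ℝ) 1).symm) ▸
        Set.mem_range_self (f := ⇑((lineP (0:ℝ) 1).trans ((lineP (0:ℝ) 1).symm))) t
      rcases this with h | h
      · obtain ⟨s, h⟩ := h; exact h ▸ lineP_mem (convex_Icc (0:ℝ) 1) hIcc hIcc1 s
      · obtain ⟨s, h⟩ := h
        exact h ▸ lineP_mem (convex_Icc (0:ℝ) 1) hIcc hIcc1 (unitInterval.symm s)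
    · intro t; exact lineP_mem (convex_Icc (0:ℝ) 1) hIcc hIcc t
  have hsub : p.extend '' Set.Icc (0:ℝ) 1 ⊆ U i := by
    rintro _ ⟨s, hs, rfl⟩
    rw [Path.extend_apply p hs]
    exact hp (Set.mem_range_self _)
  have h1 : φ i u u (p.trans p.symm) = φ i u u (Path.refl u) := by
    apply hh i u u _ _ _ _ (hhtp.mono hsub)
    · rw [Path.trans_range]; exact Set.union_subset hp hps
    · rw [Path.refl_range]; exact Set.singleton_subset_iff.2 hu
  rw [hm i u w u p p.symm hp hps, phi_refl hm hh i hu] at h1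
  exact eq_inv_of_mul_eq_one_right h1

end vk
section chains
variable {X : Type*} [TopologicalSpace X] {G : Type*} [Group G] {ι : Type*}
variable {U : ι → Set X} {φ : (i : ι) → (x y : X) → Path x y → G}

variable (φ) in
/-- The value assigned to the uniform chain with `n` pieces of length `δ` starting at `a`. -/
noncomputable def chainVal {x y : X} (γ : Path x y) (a δ : ℝ) (n : ℕ) (c : ℕ → ι) : G :=
  prodG (fun k => φ (c k) (γ.extend (a + (k : ℝ) * δ)) (γ.extend (a + ((k : ℝ) + 1) * δ))
    (seg γ (a + (k : ℝ) * δ) (a + ((k : ℝ) + 1) * δ))) n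

theorem chainVal_succ {x y : X} (γ : Path x y) (a δ : ℝ) (n : ℕ) (c : ℕ → ι) :
    chainVal φ γ a δ (n + 1) c = chainVal φ γ a δ n c *
      φ (c n) (γ.extend (a + (n : ℝ) * δ)) (γ.extend (a + ((n : ℝ) + 1) * δ))
        (seg γ (a + (n : ℝ) * δ) (a + ((n : ℝ) + 1) * δ)) := rfl

variable (U) in
/-- The chain is adapted to the cover. -/
def GoodChain {x y : X} (γ : Path x y) (a δ : ℝ) (n : ℕ) (c : ℕ → ι) : Prop :=
  ∀ k, k < n → γ.extend '' Set.Icc (a + (k : ℝ) * δ) (a + ((k : ℝ) + 1) * δ) ⊆ U (c k)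

theorem seg_range_subset {x y : X} (γ : Path x y) {a δ : ℝ} (hδ : 0 ≤ δ) (k : ℕ) :
    Set.range ⇑(seg γ (a + (k : ℝ) * δ) (a + ((k : ℝ) + 1) * δ)) ⊆
      γ.extend '' Set.Icc (a + (k : ℝ) * δ) (a + ((k : ℝ) + 1) * δ) :=
  seg_range γ (Set.left_mem_Icc.2 (by nlinarith)) (Set.right_mem_Icc.2 (by nlinarith))

set_option maxHeartbeats 1000000 in
/-- Splitting a single `φ`-value along a finer uniform subdivision (all in `U i`). -/
theorem phi_split (hh : VKHom U φ) (hm : VKMul U φ) (i : ι) {x y : X} (γ : Path x y)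
    (a δ : ℝ) (hδ : 0 ≤ δ) :
    ∀ m : ℕ, γ.extend '' Set.Icc a (a + (m : ℝ) * δ) ⊆ U i →
      φ i (γ.extend a) (γ.extend (a + (m : ℝ) * δ)) (seg γ a (a + (m : ℝ) * δ)) =
        chainVal φ γ a δ m (fun _ => i) := by
  intro m
  induction m with
  | zero =>
    intro himg
    have hmem : γ.extend a ∈ U i := himg ⟨a, by simp, rfl⟩
    have hconst : ∀ t : unitInterval, (seg γ a (a + ((0 : ℕ) : ℝ) * δ)) t = γ.extend a := by
      intro t
      rw [seg_apply]
      congr 1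
      push_cast
      ring
    exact phi_const hm hh i _ hmem hconst
  | succ m ih =>
    intro himg
    have hcast : ((m + 1 : ℕ) : ℝ) = (m : ℝ) + 1 := by push_cast; ring
    rw [hcast] at himg ⊢
    have hle1 : a + (m : ℝ) * δ ≤ a + ((m : ℝ) + 1) * δ := by nlinarith
    have hle0 : a ≤ a + (m : ℝ) * δ := by nlinarith
    have hsub : Set.Icc a (a + (m : ℝ) * δ) ⊆ Set.Icc a (a + ((m : ℝ) + 1) * δ) :=
      Set.Icc_subset_Icc le_rfl hle1
    have hmemL : a ∈ Set.Icc a (a + ((m : ℝ) + 1) * δ) := Set.left_mem_Icc.2 (hle0.trans hle1)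
    have hmemM : a + (m : ℝ) * δ ∈ Set.Icc a (a + ((m : ℝ) + 1) * δ) := ⟨hle0, hle1⟩
    have hmemR : a + ((m : ℝ) + 1) * δ ∈ Set.Icc a (a + ((m : ℝ) + 1) * δ) :=
      Set.right_mem_Icc.2 (hle0.trans hle1)
    -- the three relevant segments all have range in U i
    have hr1 : Set.range ⇑(seg γ a (a + ((m : ℝ) + 1) * δ)) ⊆ U i :=
      (seg_range γ hmemL hmemR).trans himg
    have hr2 : Set.range ⇑(seg γ a (a + (m : ℝ) * δ)) ⊆ U i :=
      (seg_range γ hmemL hmemM).trans himg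
    have hr3 : Set.range ⇑(seg γ (a + (m : ℝ) * δ) (a + ((m : ℝ) + 1) * δ)) ⊆ U i :=
      (seg_range γ hmemM hmemR).trans himg
    -- homotopy between the whole segment and the concatenation
    have htp : HomotopicIn (γ.extend '' Set.Icc a (a + ((m : ℝ) + 1) * δ))
        (seg γ a (a + ((m : ℝ) + 1) * δ))
        ((seg γ a (a + (m : ℝ) * δ)).trans (seg γ (a + (m : ℝ) * δ) (a + ((m : ℝ) + 1) * δ))) := by
      apply homotopicIn_comp (GG γ) (convex_Icc a (a + ((m : ℝ) + 1) * δ))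
        (lineP a (a + ((m : ℝ) + 1) * δ))
        ((lineP a (a + (m : ℝ) * δ)).trans (lineP (a + (m : ℝ) * δ) (a + ((m : ℝ) + 1) * δ)))
        ?_ ?_ _ _ (seg_comp γ _ _)
        (trans_comp _ _ _ _ (GG γ) (seg_comp γ _ _) (seg_comp γ _ _))
      · intro t; exact lineP_mem (convex_Icc _ _) hmemL hmemR t
      · intro t
        have := Path.trans_range (lineP a (a + (m : ℝ) * δ))
            (lineP (a + (m : ℝ) * δ) (a + ((m : ℝ) + 1) * δ)) ▸
          Set.mem_range_self
            (f := ⇑((lineP a (a + (m : ℝ) * δ)).trans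
              (lineP (a + (m : ℝ) * δ) (a + ((m : ℝ) + 1) * δ)))) t
        rcases this with h | h
        · obtain ⟨s, h⟩ := h; exact h ▸ lineP_mem (convex_Icc _ _) hmemL hmemM s
        · obtain ⟨s, h⟩ := h; exact h ▸ lineP_mem (convex_Icc _ _) hmemM hmemR s
    have h1 : φ i (γ.extend a) (γ.extend (a + ((m : ℝ) + 1) * δ))
        (seg γ a (a + ((m : ℝ) + 1) * δ)) =
        φ i _ _ ((seg γ a (a + (m : ℝ) * δ)).trans
          (seg γ (a + (m : ℝ) * δ) (a + ((m : ℝ) + 1) * δ))) := by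
      apply hh i _ _ _ _ hr1 ?_ (htp.mono himg)
      rw [Path.trans_range]; exact Set.union_subset hr2 hr3
    have himg' : γ.extend '' Set.Icc a (a + (m : ℝ) * δ) ⊆ U i :=
      (Set.image_mono hsub).trans himg
    rw [h1, hm i _ _ _ _ _ hr2 hr3, ih himg', chainVal_succ]

end chains
section refine
variable {X : Type*} [TopologicalSpace X] {G : Type*} [Group G] {ι : Type*}
variable {U : ι → Set X} {φ : (i : ι) → (x y : X) → Path x y → G}

theorem GoodChain.refine {x y : X} {γ : Path x y} {a δ : ℝ} {n : ℕ} {c : ℕ → ι}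
    (h : GoodChain U γ a δ n c) (hδ : 0 ≤ δ) {m : ℕ} (hm : 1 ≤ m) :
    GoodChain U γ a (δ / m) (n * m) (fun k => c (k / m)) := by
  intro k hk
  have hmpos : 0 < m := hm
  have hq : k / m < n := Nat.div_lt_iff_lt_mul hmpos |>.2 hk
  refine (Set.image_mono ?_).trans (h (k / m) hq)
  have hm0 : (m : ℝ) ≠ 0 := by positivity
  have hlow : ((k / m : ℕ) : ℝ) * m ≤ (k : ℝ) := by exact_mod_cast Nat.div_mul_le_self k m
  have hhigh : (k : ℝ) + 1 ≤ (((k / m : ℕ) : ℝ) + 1) * m := by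
    have h1 := Nat.div_add_mod k m
    have h2 : k % m < m := Nat.mod_lt k hmpos
    have : k + 1 ≤ (k / m + 1) * m := by
      have e : (k / m + 1) * m = m * (k / m) + m := by ring
      omega
    exact_mod_cast this
  have hδm : 0 ≤ δ / m := by positivity
  apply Set.Icc_subset_Icc
  · have : ((k / m : ℕ) : ℝ) * δ = (((k / m : ℕ) : ℝ) * m) * (δ / m) := by field_simp
    rw [this]
    nlinarith [mul_le_mul_of_nonneg_right hlow hδm]
  · have : (((k / m : ℕ) : ℝ) + 1) * δ = ((((k / m : ℕ) : ℝ) + 1) * m) * (δ / m) := by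
      field_simp
    rw [this]
    nlinarith [mul_le_mul_of_nonneg_right hhigh hδm]

theorem chainVal_refine (hh : VKHom U φ) (hm : VKMul U φ) {x y : X} (γ : Path x y)
    {δ : ℝ} (hδ : 0 ≤ δ) {m : ℕ} (hm1 : 1 ≤ m) :
    ∀ n a c, GoodChain U γ a δ n c →
      chainVal φ γ a (δ / m) (n * m) (fun k => c (k / m)) = chainVal φ γ a δ n c := by
  intro n
  induction n with
  | zero => intro a c _; rw [Nat.zero_mul]; rfl
  | succ n ih =>
    intro a c hgood
    have hgood' : GoodChain U γ a δ n c := fun k hk => hgood k (hk.trans (Nat.lt_succ_self n))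
    have hmR : (m : ℝ) ≠ 0 := by positivity
    rw [show (n + 1) * m = n * m + m by ring]
    unfold chainVal
    rw [prodG_add]
    have first : prodG (fun k => φ (c (k / m)) (γ.extend (a + (k : ℝ) * (δ / m)))
        (γ.extend (a + ((k : ℝ) + 1) * (δ / m)))
        (seg γ (a + (k : ℝ) * (δ / m)) (a + ((k : ℝ) + 1) * (δ / m)))) (n * m) =
        chainVal φ γ a δ n c := ih a c hgood'
    rw [first]
    congr 1
    -- second block equals the n-th coarse piece
    have hblock : ∀ k, k < m → (fun k => φ (c ((n * m + k) / m))
        (γ.extend (a + ((n * m + k : ℕ) : ℝ) * (δ / m)))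
        (γ.extend (a + (((n * m + k : ℕ) : ℝ) + 1) * (δ / m)))
        (seg γ (a + ((n * m + k : ℕ) : ℝ) * (δ / m))
          (a + (((n * m + k : ℕ) : ℝ) + 1) * (δ / m)))) k =
        (fun k => φ (c n) (γ.extend ((a + (n : ℝ) * δ) + (k : ℝ) * (δ / m)))
        (γ.extend ((a + (n : ℝ) * δ) + ((k : ℝ) + 1) * (δ / m)))
        (seg γ ((a + (n : ℝ) * δ) + (k : ℝ) * (δ / m))
          ((a + (n : ℝ) * δ) + ((k : ℝ) + 1) * (δ / m)))) k := by
      intro k hk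
      have hidx : (n * m + k) / m = n := by
        rw [Nat.add_comm, Nat.add_mul_div_right _ _ hm1, Nat.div_eq_of_lt hk]
        omega
      have e1 : a + ((n * m + k : ℕ) : ℝ) * (δ / m) = (a + (n : ℝ) * δ) + (k : ℝ) * (δ / m) := by
        push_cast
        field_simp
        ring
      have e2 : a + (((n * m + k : ℕ) : ℝ) + 1) * (δ / m) =
          (a + (n : ℝ) * δ) + ((k : ℝ) + 1) * (δ / m) := by
        push_cast
        field_simp
        ring
      simp only [hidx]
      exact seg_piece_congr (φ (c n)) γ e1 e2
    have hblockprod : prodG (fun k => φ (c ((n * m + k) / m))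
        (γ.extend (a + ((n * m + k : ℕ) : ℝ) * (δ / m)))
        (γ.extend (a + (((n * m + k : ℕ) : ℝ) + 1) * (δ / m)))
        (seg γ (a + ((n * m + k : ℕ) : ℝ) * (δ / m))
          (a + (((n * m + k : ℕ) : ℝ) + 1) * (δ / m)))) m =
        chainVal φ γ (a + (n : ℝ) * δ) (δ / m) m (fun _ => c n) :=
      prodG_congr hblock
    have himg : γ.extend '' Set.Icc (a + (n : ℝ) * δ) ((a + (n : ℝ) * δ) + (m : ℝ) * (δ / m)) ⊆
        U (c n) := by
      have e : (a + (n : ℝ) * δ) + (m : ℝ) * (δ / m) = a + ((n : ℝ) + 1) * δ := by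
        field_simp; ring
      rw [e]
      exact hgood n (Nat.lt_succ_self n)
    have hsplit := phi_split hh hm (c n) γ (a + (n : ℝ) * δ) (δ / m) (by positivity) m himg
    rw [hblockprod, ← hsplit]
    show φ (c n) _ _ (seg γ (a + (n : ℝ) * δ) ((a + (n : ℝ) * δ) + (m : ℝ) * (δ / m))) =
      φ (c n) (γ.extend (a + (n : ℝ) * δ)) (γ.extend (a + ((n : ℝ) + 1) * δ))
        (seg γ (a + (n : ℝ) * δ) (a + ((n : ℝ) + 1) * δ))
    exact seg_piece_congr (φ (c n)) γ rfl (by field_simp; ring)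

end refine
section indep
variable {X : Type*} [TopologicalSpace X] {G : Type*} [Group G] {ι : Type*}
variable {U : ι → Set X} {φ : (i : ι) → (x y : X) → Path x y → G}

theorem chainVal_indep (hh : VKHom U φ) (hm : VKMul U φ) (hco : VKCompat U φ)
    {x y : X} (γ : Path x y) {n n' : ℕ} {c c' : ℕ → ι} (hn : 1 ≤ n) (hn' : 1 ≤ n')
    (h : GoodChain U γ 0 (1 / (n : ℝ)) n c) (h' : GoodChain U γ 0 (1 / (n' : ℝ)) n' c') :
    chainVal φ γ 0 (1 / (n : ℝ)) n c = chainVal φ γ 0 (1 / (n' : ℝ)) n' c' := by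
  have hδ : (0:ℝ) ≤ 1 / (n : ℝ) := by positivity
  have hδ' : (0:ℝ) ≤ 1 / (n' : ℝ) := by positivity
  have r1 := chainVal_refine hh hm γ hδ hn' n 0 c h
  have r2 := chainVal_refine hh hm γ hδ' hn n' 0 c' h'
  rw [← r1, ← r2]
  have hn0 : ((n:ℝ)) ≠ 0 := by positivity
  have hn0' : ((n':ℝ)) ≠ 0 := by positivity
  have e : (1 / (n' : ℝ)) / (n : ℝ) = (1 / (n : ℝ)) / (n' : ℝ) := by
    rw [div_div, div_div, mul_comm]
  have eN : n' * n = n * n' := Nat.mul_comm n' n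
  have good1 : GoodChain U γ 0 ((1 / (n : ℝ)) / (n' : ℝ)) (n * n') (fun k => c (k / n')) :=
    h.refine hδ hn'
  have good2 : GoodChain U γ 0 ((1 / (n : ℝ)) / (n' : ℝ)) (n * n') (fun k => c' (k / n)) := by
    rw [← e, ← eN]
    exact h'.refine hδ' hn
  have : chainVal φ γ 0 ((1 / (n' : ℝ)) / (n : ℝ)) (n' * n) (fun k => c' (k / n)) =
      chainVal φ γ 0 ((1 / (n : ℝ)) / (n' : ℝ)) (n * n') (fun k => c' (k / n)) := by
    rw [e, eN]
  rw [this]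
  unfold chainVal
  apply prodG_congr
  intro k hk
  have hδδ : (0:ℝ) ≤ (1 / (n : ℝ)) / (n' : ℝ) := by positivity
  apply hco
  apply Set.subset_inter
  · exact (seg_range_subset γ hδδ k).trans (good1 k hk)
  · exact (seg_range_subset γ hδδ k).trans (good2 k hk)

theorem exists_goodChain (hopen : ∀ i, IsOpen (U i)) (hcover : ∀ z : X, ∃ i, z ∈ U i)
    {x y : X} (γ : Path x y) :
    ∃ n : ℕ, 1 ≤ n ∧ ∃ c : ℕ → ι, GoodChain U γ 0 (1 / (n : ℝ)) n c := by
  have hne : Nonempty ι := ⟨(hcover x).choose⟩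
  have hop : ∀ i, IsOpen (⇑γ ⁻¹' U i) := fun i => (hopen i).preimage γ.continuous
  have hcov : Set.univ ⊆ ⋃ i, ⇑γ ⁻¹' U i := fun t _ =>
    Set.mem_iUnion.2 ⟨(hcover (γ t)).choose, (hcover (γ t)).choose_spec⟩
  obtain ⟨δ, hδpos, hball⟩ := lebesgue_number_lemma_of_metric isCompact_univ hop hcov
  obtain ⟨n₀, hn₀⟩ := exists_nat_one_div_lt hδpos
  set n := n₀ + 1 with hn
  have hn1 : 1 ≤ n := Nat.le_add_left 1 n₀
  have hnpos : (0:ℝ) < n := by positivity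
  have hsmall : 1 / (n : ℝ) < δ := by exact_mod_cast hn₀
  -- center points
  have hz : ∀ k : ℕ, k < n → ((k : ℝ) / n) ∈ Set.Icc (0:ℝ) 1 := by
    intro k hk
    constructor
    · positivity
    · rw [div_le_one hnpos]; exact_mod_cast hk.le
  refine ⟨n, hn1, ?_⟩
  have hchoice : ∀ k : ℕ, ∃ i, Metric.ball (Set.projIcc (0:ℝ) 1 zero_le_one ((k:ℝ)/n)) δ ⊆
      ⇑γ ⁻¹' U i := fun k => hball _ (Set.mem_univ _)
  refine ⟨fun k => (hchoice k).choose, ?_⟩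
  intro k hk
  rintro _ ⟨t, ht, rfl⟩
  have h1 : (0:ℝ) ≤ t := by
    have h0 : (0:ℝ) + (k:ℝ) * (1 / n) ≥ 0 := by positivity
    linarith [ht.1]
  have h2 : t ≤ 1 := by
    have hup : (0:ℝ) + ((k:ℝ) + 1) * (1 / n) ≤ 1 := by
      rw [zero_add, mul_one_div, div_le_one hnpos]
      exact_mod_cast Nat.succ_le_of_lt hk
    linarith [ht.2]
  have ht01 : t ∈ Set.Icc (0:ℝ) 1 := ⟨h1, h2⟩
  rw [Path.extend_apply γ ht01]
  show γ ⟨t, ht01⟩ ∈ U ((hchoice k).choose)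
  apply (hchoice k).choose_spec
  rw [Metric.mem_ball, Subtype.dist_eq]
  have hcenter : ((Set.projIcc (0:ℝ) 1 zero_le_one ((k:ℝ)/n)) : ℝ) = (k:ℝ)/n := by
    rw [Set.projIcc_of_mem _ (hz k hk)]
  rw [hcenter]
  have habs : |t - (k:ℝ)/n| ≤ 1/n := by
    rw [abs_le]
    have hl := ht.1
    have hr := ht.2
    rw [zero_add] at hl hr
    have hdiv : (k:ℝ)/n = (k:ℝ)*(1/n) := by ring
    constructor
    · rw [hdiv]; linarith
    · rw [hdiv]; linarith
  calc dist (t : ℝ) ((k:ℝ)/n) = |t - (k:ℝ)/n| := by rw [Real.dist_eq]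
  _ ≤ 1/n := habs
  _ < δ := hsmall

variable (U φ) in
/-- The glued homomorphism. -/
noncomputable def PhiDef (hopen : ∀ i, IsOpen (U i)) (hcover : ∀ z : X, ∃ i, z ∈ U i) :
    ∀ x y : X, Path x y → G := fun _ _ γ =>
  chainVal φ γ 0 (1 / ((exists_goodChain hopen hcover γ).choose : ℝ))
    (exists_goodChain hopen hcover γ).choose
    ((exists_goodChain hopen hcover γ).choose_spec.2.choose)

theorem PhiDef_spec (hh : VKHom U φ) (hm : VKMul U φ) (hco : VKCompat U φ)
    (hopen : ∀ i, IsOpen (U i)) (hcover : ∀ z : X, ∃ i, z ∈ U i)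
    {x y : X} (γ : Path x y) {n : ℕ} {c : ℕ → ι} (hn : 1 ≤ n)
    (h : GoodChain U γ 0 (1 / (n : ℝ)) n c) :
    PhiDef U φ hopen hcover x y γ = chainVal φ γ 0 (1 / (n : ℝ)) n c :=
  chainVal_indep hh hm hco γ (exists_goodChain hopen hcover γ).choose_spec.1 hn
    (exists_goodChain hopen hcover γ).choose_spec.2.choose_spec h

theorem PhiDef_extends (hh : VKHom U φ) (hm : VKMul U φ) (hco : VKCompat U φ)
    (hopen : ∀ i, IsOpen (U i)) (hcover : ∀ z : X, ∃ i, z ∈ U i)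
    (i : ι) {x y : X} (γ : Path x y) (hγ : Set.range ⇑γ ⊆ U i) :
    PhiDef U φ hopen hcover x y γ = φ i x y γ := by
  have hgood : GoodChain U γ 0 (1 / ((1:ℕ) : ℝ)) 1 (fun _ => i) := by
    intro k hk
    interval_cases k
    rintro _ ⟨t, ht, rfl⟩
    have ht01 : t ∈ Set.Icc (0:ℝ) 1 := by
      constructor
      · have := ht.1; norm_num at this ⊢; linarith
      · have := ht.2; norm_num at this ⊢; linarith
    rw [Path.extend_apply γ ht01]
    exact hγ (Set.mem_range_self _)
  rw [PhiDef_spec hh hm hco hopen hcover γ le_rfl hgood]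
  show (1 : G) * _ = _
  rw [one_mul]
  apply path_congr (φ i)
  · show γ.extend (0 + ((0:ℕ):ℝ) * (1 / ((1:ℕ):ℝ))) = x
    norm_num
  · show γ.extend (0 + (((0:ℕ):ℝ) + 1) * (1 / ((1:ℕ):ℝ))) = y
    norm_num
  · intro t
    rw [seg_apply]
    have : (1 - (t:ℝ)) * (0 + ((0:ℕ):ℝ) * (1 / ((1:ℕ):ℝ))) +
        (t:ℝ) * (0 + (((0:ℕ):ℝ) + 1) * (1 / ((1:ℕ):ℝ))) = (t:ℝ) := by norm_num
    rw [this, Path.extend_apply γ (by exact t.2 : (t:ℝ) ∈ Set.Icc (0:ℝ) 1), Subtype.coe_eta]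
end indep
section mul
variable {X : Type*} [TopologicalSpace X] {G : Type*} [Group G] {ι : Type*}
variable {U : ι → Set X} {φ : (i : ι) → (x y : X) → Path x y → G}

theorem trans_extend_left {x y z : X} (γ : Path x y) (μ : Path y z) {u : ℝ} (hu : u ≤ 1/2) :
    (γ.trans μ).extend u = γ.extend (2 * u) := by
  rcases le_or_gt u 0 with h | h
  · rw [Path.extend_of_le_zero _ h, Path.extend_of_le_zero _ (by linarith)]
  · have hu1 : u ∈ Set.Icc (0:ℝ) 1 := ⟨h.le, by linarith⟩
    rw [Path.extend_apply _ hu1, Path.trans_apply]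
    simp only [hu, dif_pos]
    rw [Path.extend_apply γ (by constructor <;> linarith : 2*u ∈ Set.Icc (0:ℝ) 1)]
  
theorem trans_extend_right {x y z : X} (γ : Path x y) (μ : Path y z) {u : ℝ} (hu : 1/2 ≤ u) :
    (γ.trans μ).extend u = μ.extend (2 * u - 1) := by
  rcases lt_or_ge 1 u with h | h
  · rw [Path.extend_of_one_le _ h.le, Path.extend_of_one_le _ (by linarith)]
  · have hu1 : u ∈ Set.Icc (0:ℝ) 1 := ⟨by linarith, h⟩
    rw [Path.extend_apply _ hu1, Path.trans_apply]
    rcases eq_or_lt_of_le hu with heq | hlt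
    · rw [dif_pos (show ((⟨u, hu1⟩ : unitInterval) : ℝ) ≤ 1/2 from heq.ge)]
      have h0 : 2*u - 1 = 0 := by rw [← heq]; norm_num
      have hval : ∀ hp, γ (⟨2 * ((⟨u, hu1⟩ : unitInterval) : ℝ), hp⟩ : unitInterval) = y := by
        intro hp
        have h1 : (⟨2 * ((⟨u, hu1⟩ : unitInterval) : ℝ), hp⟩ : unitInterval) = 1 :=
          Subtype.ext (by show 2*u = 1; rw [← heq]; norm_num)
        rw [h1, γ.target]
      rw [h0, Path.extend_zero]
      exact hval _
    · have hn : ¬((⟨u, hu1⟩ : unitInterval) : ℝ) ≤ 1/2 := by simpa using hlt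
      rw [dif_neg hn]
      rw [Path.extend_apply μ (by constructor <;> linarith : 2*u - 1 ∈ Set.Icc (0:ℝ) 1)]

theorem seg_trans_left {X : Type*} [TopologicalSpace X] {x y z : X} (γ : Path x y)
    (μ : Path y z) {s s' : ℝ} (hs2 : s ≤ 1/2) (ht2 : s' ≤ 1/2) :
    ∀ u, seg (γ.trans μ) s s' u = seg γ (2*s) (2*s') u := by
  intro u
  rw [seg_apply, seg_apply]
  have hw : (1-(u:ℝ))*s + (u:ℝ)*s' ≤ 1/2 := by nlinarith [u.2.1, u.2.2]
  rw [trans_extend_left γ μ hw]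
  congr 1
  ring

theorem seg_trans_right {X : Type*} [TopologicalSpace X] {x y z : X} (γ : Path x y)
    (μ : Path y z) {s s' : ℝ} (hs2 : 1/2 ≤ s) (ht2 : 1/2 ≤ s') :
    ∀ u, seg (γ.trans μ) s s' u = seg μ (2*s - 1) (2*s' - 1) u := by
  intro u
  rw [seg_apply, seg_apply]
  have hw : 1/2 ≤ (1-(u:ℝ))*s + (u:ℝ)*s' := by nlinarith [u.2.1, u.2.2]
  rw [trans_extend_right γ μ hw]
  congr 1
  ring

theorem PhiDef_mul (hh : VKHom U φ) (hm : VKMul U φ) (hco : VKCompat U φ)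
    (hopen : ∀ i, IsOpen (U i)) (hcover : ∀ z : X, ∃ i, z ∈ U i)
    {x y z : X} (γ : Path x y) (μ : Path y z) :
    PhiDef U φ hopen hcover x z (γ.trans μ) =
      PhiDef U φ hopen hcover x y γ * PhiDef U φ hopen hcover y z μ := by
  obtain ⟨n, hn1, c, hc⟩ := exists_goodChain (U := U) hopen hcover γ
  obtain ⟨m, hm1, d, hd⟩ := exists_goodChain (U := U) hopen hcover μ
  set N := n * m with hN
  have hN1 : 1 ≤ N := Nat.one_le_iff_ne_zero.2 (by positivity)
  have hNR : (0:ℝ) < (N:ℝ) := by exact_mod_cast hN1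
  have eδγ : (1 / (n:ℝ)) / (m:ℝ) = 1 / ((N:ℕ):ℝ) := by
    rw [div_div]; congr 1; push_cast [hN]; ring
  have eδμ : (1 / (m:ℝ)) / (n:ℝ) = 1 / ((N:ℕ):ℝ) := by
    rw [div_div]; congr 1; push_cast [hN]; ring
  have cg : GoodChain U γ 0 (1 / ((N:ℕ):ℝ)) N (fun k => c (k / m)) := by
    have := hc.refine (by positivity) hm1
    rwa [eδγ] at this
  have dg : GoodChain U μ 0 (1 / ((N:ℕ):ℝ)) N (fun k => d (k / n)) := by
    have := hd.refine (by positivity) hn1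
    rw [eδμ] at this
    rwa [Nat.mul_comm m n] at this
  classical
  set cN : ℕ → ι := fun k => c (k / m) with hcN
  set dN : ℕ → ι := fun k => d (k / n) with hdN
  set e : ℕ → ι := fun k => if k < N then cN k else dN (k - N) with he
  set M := 2 * N with hM
  have hM1 : 1 ≤ M := by omega
  have hMR : (0:ℝ) < (M:ℝ) := by exact_mod_cast hM1
  have hMN : ((M:ℕ):ℝ) = 2 * ((N:ℕ):ℝ) := by push_cast [hM]; ring
  -- goodness of the glued chain
  have hegood : GoodChain U (γ.trans μ) 0 (1 / ((M:ℕ):ℝ)) M e := by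
    intro k hk
    rcases lt_or_ge k N with hkN | hkN
    · -- left half
      have heq : e k = cN k := if_pos hkN
      rw [heq]
      rintro _ ⟨t, ht, rfl⟩
      have ht2 : t ≤ 1/2 := by
        have h2 := ht.2
        rw [zero_add] at h2
        have : ((k:ℝ) + 1) * (1 / (M:ℝ)) ≤ 1/2 := by
          rw [hMN]
          rw [mul_one_div, div_le_div_iff₀ (by linarith) (by norm_num)]
          have : (k:ℝ) + 1 ≤ (N:ℝ) := by exact_mod_cast hkN
          linarith
        linarith
      rw [trans_extend_left γ μ ht2]
      apply cg k hkN
      refine ⟨2 * t, ?_, rfl⟩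
      have hl := ht.1; have hr := ht.2
      rw [zero_add] at hl hr
      constructor
      · have e1 : (0:ℝ) + (k:ℝ) * (1/(N:ℝ)) = 2 * ((k:ℝ) * (1/(M:ℝ))) := by
          rw [hMN]; field_simp; ring
        rw [e1]; linarith
      · have e2 : (0:ℝ) + ((k:ℝ) + 1) * (1/(N:ℝ)) = 2 * (((k:ℝ) + 1) * (1/(M:ℝ))) := by
          rw [hMN]; field_simp; ring
        rw [e2]; linarith
    · -- right half
      have heq : e k = dN (k - N) := if_neg (by omega)
      rw [heq]
      rintro _ ⟨t, ht, rfl⟩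
      have ht2 : 1/2 ≤ t := by
        have h1 := ht.1
        rw [zero_add] at h1
        have : (1:ℝ)/2 ≤ (k:ℝ) * (1 / (M:ℝ)) := by
          rw [hMN, mul_one_div, div_le_div_iff₀ (by norm_num) (by linarith)]
          have : (N:ℝ) ≤ (k:ℝ) := by exact_mod_cast hkN
          linarith
        linarith
      rw [trans_extend_right γ μ ht2]
      apply dg (k - N) (by omega)
      refine ⟨2 * t - 1, ?_, rfl⟩
      have hl := ht.1; have hr := ht.2
      rw [zero_add] at hl hr
      have hkc : ((k - N : ℕ) : ℝ) = (k:ℝ) - (N:ℝ) := by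
        have : N ≤ k := hkN
        push_cast [this]
        ring
      constructor
      · have e1 : (0:ℝ) + ((k - N : ℕ):ℝ) * (1/(N:ℝ)) = 2 * ((k:ℝ) * (1/(M:ℝ))) - 1 := by
          rw [hkc, hMN]; field_simp; ring
        rw [e1]; linarith
      · have e2 : (0:ℝ) + (((k - N : ℕ):ℝ) + 1) * (1/(N:ℝ)) =
            2 * (((k:ℝ) + 1) * (1/(M:ℝ))) - 1 := by
          rw [hkc, hMN]; field_simp; ring
        rw [e2]; linarith
  rw [PhiDef_spec hh hm hco hopen hcover (γ.trans μ) hM1 hegood,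
    PhiDef_spec hh hm hco hopen hcover γ hN1 cg,
    PhiDef_spec hh hm hco hopen hcover μ hN1 dg]
  unfold chainVal
  have hsplitM : ∀ g : ℕ → G, prodG g M = prodG g N * prodG (fun k => g (N + k)) N := by
    intro g
    rw [show M = N + N by omega]
    exact prodG_add g N N
  rw [hsplitM]
  congr 1
  · -- first half
    apply prodG_congr
    intro k hk
    have hek : e k = cN k := if_pos hk
    rw [hek]
    have hkN1 : (k:ℝ) + 1 ≤ (N:ℝ) := by exact_mod_cast hk
    have hs2 : (0:ℝ) + (k:ℝ) * (1/(M:ℝ)) ≤ 1/2 := by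
      rw [zero_add, hMN, mul_one_div, div_le_div_iff₀ (by linarith) (by norm_num)]
      linarith
    have ht2 : (0:ℝ) + ((k:ℝ) + 1) * (1/(M:ℝ)) ≤ 1/2 := by
      rw [zero_add, hMN, mul_one_div, div_le_div_iff₀ (by linarith) (by norm_num)]
      linarith
    have e1 : 2 * ((0:ℝ) + (k:ℝ) * (1/(M:ℝ))) = 0 + (k:ℝ) * (1/(N:ℝ)) := by
      rw [hMN]; field_simp; ring
    have e2 : 2 * ((0:ℝ) + ((k:ℝ) + 1) * (1/(M:ℝ))) = 0 + ((k:ℝ) + 1) * (1/(N:ℝ)) := by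
      rw [hMN]; field_simp; ring
    apply path_congr (φ (cN k))
    · rw [trans_extend_left γ μ hs2, e1]
    · rw [trans_extend_left γ μ ht2, e2]
    · intro u
      rw [seg_trans_left γ μ hs2 ht2 u, ← e1, ← e2]
  · -- second half
    apply prodG_congr
    intro k hk
    show φ (e (N + k)) _ _ (seg (γ.trans μ) (0 + ((N + k : ℕ):ℝ) * (1/(M:ℝ)))
        (0 + (((N + k : ℕ):ℝ) + 1) * (1/(M:ℝ)))) =
      φ (dN k) _ _ (seg μ (0 + (k:ℝ) * (1/(N:ℝ))) (0 + ((k:ℝ) + 1) * (1/(N:ℝ))))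
    have hek : e (N + k) = dN k := by
      show (if N + k < N then cN (N + k) else dN (N + k - N)) = dN k
      rw [if_neg (by omega)]
      congr 1
      omega
    rw [hek]
    have hcast : ((N + k : ℕ):ℝ) = (N:ℝ) + (k:ℝ) := by push_cast; ring
    have hkN1 : (k:ℝ) + 1 ≤ (N:ℝ) := by exact_mod_cast hk
    have hkpos : (0:ℝ) ≤ (k:ℝ) := by positivity
    have hs2 : (1:ℝ)/2 ≤ 0 + ((N + k : ℕ):ℝ) * (1/(M:ℝ)) := by
      rw [zero_add, hcast, hMN, mul_one_div, div_le_div_iff₀ (by norm_num) (by linarith)]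
      linarith
    have ht2 : (1:ℝ)/2 ≤ 0 + (((N + k : ℕ):ℝ) + 1) * (1/(M:ℝ)) := by
      rw [zero_add, hcast, hMN, mul_one_div, div_le_div_iff₀ (by norm_num) (by linarith)]
      linarith
    have e1 : 2 * ((0:ℝ) + ((N + k : ℕ):ℝ) * (1/(M:ℝ))) - 1 = 0 + (k:ℝ) * (1/(N:ℝ)) := by
      rw [hcast, hMN]; field_simp; ring
    have e2 : 2 * ((0:ℝ) + (((N + k : ℕ):ℝ) + 1) * (1/(M:ℝ))) - 1 =
        0 + ((k:ℝ) + 1) * (1/(N:ℝ)) := by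
      rw [hcast, hMN]; field_simp; ring
    apply path_congr (φ (dN k))
    · rw [trans_extend_right γ μ hs2, e1]
    · rw [trans_extend_right γ μ ht2, e2]
    · intro u
      rw [seg_trans_right γ μ hs2 ht2 u, ← e1, ← e2]
end mul
section grid
variable {X : Type*} [TopologicalSpace X] {G : Type*} [Group G] {ι : Type*}
variable {U : ι → Set X} {φ : (i : ι) → (x y : X) → Path x y → G}

variable (U) in
/-- The continuous extension of a path homotopy to the whole plane. -/
noncomputable def HHmap {x y : X} {γ γ' : Path x y} (H : Path.Homotopy γ γ') : C(ℝ × ℝ, X) :=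
  ⟨fun p => H (Set.projIcc 0 1 zero_le_one p.1, Set.projIcc 0 1 zero_le_one p.2),
    H.continuous.comp (((continuous_projIcc).comp continuous_fst).prodMk
      ((continuous_projIcc).comp continuous_snd))⟩

theorem exists_goodGrid (hopen : ∀ i, IsOpen (U i)) (hcover : ∀ z : X, ∃ i, z ∈ U i)
    {x y : X} {γ γ' : Path x y} (H : Path.Homotopy γ γ') :
    ∃ n : ℕ, 1 ≤ n ∧ ∃ c : ℕ → ℕ → ι, ∀ j k, j < n → k < n →
      HHmap H '' (Set.Icc ((j:ℝ)*(1/(n:ℝ))) (((j:ℝ)+1)*(1/(n:ℝ))) ×ˢ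
        Set.Icc (0 + (k:ℝ)*(1/(n:ℝ))) (0 + ((k:ℝ)+1)*(1/(n:ℝ)))) ⊆ U (c j k) := by
  have hop : ∀ i, IsOpen (⇑H ⁻¹' U i) := fun i => (hopen i).preimage H.continuous
  have hcov : Set.univ ⊆ ⋃ i, ⇑H ⁻¹' U i := fun p _ =>
    Set.mem_iUnion.2 ⟨(hcover (H p)).choose, (hcover (H p)).choose_spec⟩
  obtain ⟨δ, hδpos, hball⟩ := lebesgue_number_lemma_of_metric isCompact_univ hop hcov
  obtain ⟨n₀, hn₀⟩ := exists_nat_one_div_lt hδpos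
  set n := n₀ + 1 with hn
  have hn1 : 1 ≤ n := Nat.le_add_left 1 n₀
  have hnpos : (0:ℝ) < n := by positivity
  have hsmall : 1 / (n : ℝ) < δ := by exact_mod_cast hn₀
  have hchoice : ∀ j k : ℕ, ∃ i, Metric.ball
      ((Set.projIcc (0:ℝ) 1 zero_le_one ((j:ℝ)*(1/(n:ℝ))),
        Set.projIcc (0:ℝ) 1 zero_le_one ((k:ℝ)*(1/(n:ℝ)))) : unitInterval × unitInterval) δ ⊆
      ⇑H ⁻¹' U i := fun j k => hball _ (Set.mem_univ _)
  refine ⟨n, hn1, fun j k => (hchoice j k).choose, ?_⟩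
  intro j k hj hk
  rintro _ ⟨⟨s, t⟩, ⟨hs, ht⟩, rfl⟩
  simp only [Set.mem_Icc, zero_add] at hs ht
  have hjn : (j:ℝ)*(1/(n:ℝ)) ∈ Set.Icc (0:ℝ) 1 := by
    constructor
    · positivity
    · rw [mul_one_div, div_le_one hnpos]; exact_mod_cast hj.le
  have hkn : (k:ℝ)*(1/(n:ℝ)) ∈ Set.Icc (0:ℝ) 1 := by
    constructor
    · positivity
    · rw [mul_one_div, div_le_one hnpos]; exact_mod_cast hk.le
  have hs01 : s ∈ Set.Icc (0:ℝ) 1 := by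
    constructor
    · exact le_trans hjn.1 hs.1
    · refine le_trans hs.2 ?_
      rw [mul_one_div, div_le_one hnpos]
      exact_mod_cast hj
  have ht01 : t ∈ Set.Icc (0:ℝ) 1 := by
    constructor
    · exact le_trans hkn.1 ht.1
    · refine le_trans ht.2 ?_
      rw [mul_one_div, div_le_one hnpos]
      exact_mod_cast hk
  show H (Set.projIcc 0 1 zero_le_one s, Set.projIcc 0 1 zero_le_one t) ∈ _
  apply (hchoice j k).choose_spec
  rw [Metric.mem_ball, Prod.dist_eq]
  have ej : ((j:ℝ)+1)*(1/(n:ℝ)) = (j:ℝ)*(1/(n:ℝ)) + 1/(n:ℝ) := by ring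
  have ek : ((k:ℝ)+1)*(1/(n:ℝ)) = (k:ℝ)*(1/(n:ℝ)) + 1/(n:ℝ) := by ring
  have hds : dist (Set.projIcc (0:ℝ) 1 zero_le_one s)
      (Set.projIcc (0:ℝ) 1 zero_le_one ((j:ℝ)*(1/(n:ℝ)))) < δ := by
    rw [Subtype.dist_eq, Set.projIcc_of_mem _ hs01, Set.projIcc_of_mem _ hjn, Real.dist_eq]
    have : |s - (j:ℝ)*(1/(n:ℝ))| ≤ 1/(n:ℝ) :=
      abs_le.2 ⟨by linarith [hs.1, hnpos], by linarith [hs.2]⟩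
    linarith
  have hdt : dist (Set.projIcc (0:ℝ) 1 zero_le_one t)
      (Set.projIcc (0:ℝ) 1 zero_le_one ((k:ℝ)*(1/(n:ℝ)))) < δ := by
    rw [Subtype.dist_eq, Set.projIcc_of_mem _ ht01, Set.projIcc_of_mem _ hkn, Real.dist_eq]
    have : |t - (k:ℝ)*(1/(n:ℝ))| ≤ 1/(n:ℝ) :=
      abs_le.2 ⟨by linarith [ht.1, hnpos], by linarith [ht.2]⟩
    linarith
  exact max_lt hds hdt
end grid
section rowstep
variable {X : Type*} [TopologicalSpace X] {G : Type*} [Group G] {ι : Type*}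
variable {U : ι → Set X} {φ : (i : ι) → (x y : X) → Path x y → G}

theorem map_lineP_apply {E : Type*} [AddCommGroup E] [Module ℝ E] [TopologicalSpace E]
    [IsTopologicalAddGroup E] [ContinuousSMul ℝ E] (F : C(E, X)) (a b : E) (u : unitInterval) :
    ((lineP a b).map F.continuous) u = F (lineP a b u) := rfl

theorem map_lineP_range {E : Type*} [AddCommGroup E] [Module ℝ E] [TopologicalSpace E]
    [IsTopologicalAddGroup E] [ContinuousSMul ℝ E] (F : C(E, X)) {K : Set E} (hK : Convex ℝ K)
    {a b : E} (ha : a ∈ K) (hb : b ∈ K) :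
    Set.range ⇑((lineP a b).map F.continuous) ⊆ F '' K := by
  rintro _ ⟨u, rfl⟩
  exact ⟨lineP a b u, lineP_mem hK ha hb u, rfl⟩

theorem path_trans_mem {Y : Type*} [TopologicalSpace Y] {K : Set Y} {u v w : Y}
    {p : Path u v} {q : Path v w} (hp : ∀ t, p t ∈ K) (hq : ∀ t, q t ∈ K) :
    ∀ t, (p.trans q) t ∈ K := by
  intro t
  rw [Path.trans_apply]
  split_ifs
  · apply hp
  · apply hq

theorem path_symm_mem {Y : Type*} [TopologicalSpace Y] {K : Set Y} {u v : Y}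
    {p : Path u v} (hp : ∀ t, p t ∈ K) : ∀ t, (p.symm) t ∈ K := fun t => hp _

set_option maxHeartbeats 2000000 in
theorem row_step (hh : VKHom U φ) (hm : VKMul U φ) (hco : VKCompat U φ)
    (F : C(ℝ × ℝ, X)) {n : ℕ} (hn1 : 1 ≤ n) {a a' : ℝ} (ha : a ≤ a') (cc : ℕ → ι)
    (hKU : ∀ k, k < n → F '' (Set.Icc a a' ×ˢ
      Set.Icc (0 + (k:ℝ)*(1/(n:ℝ))) (0 + ((k:ℝ)+1)*(1/(n:ℝ)))) ⊆ U (cc k))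
    (hc0 : ∀ s : ℝ, F (s, (0:ℝ)) = F (a, 0)) (hc1 : ∀ s : ℝ, F (s, (1:ℝ)) = F (a, 1)) :
    prodG (fun k => φ (cc k) (F (a, 0 + (k:ℝ)*(1/(n:ℝ)))) (F (a, 0 + ((k:ℝ)+1)*(1/(n:ℝ))))
      ((lineP (a, 0 + (k:ℝ)*(1/(n:ℝ))) (a, 0 + ((k:ℝ)+1)*(1/(n:ℝ)))).map F.continuous)) n =
    prodG (fun k => φ (cc k) (F (a', 0 + (k:ℝ)*(1/(n:ℝ)))) (F (a', 0 + ((k:ℝ)+1)*(1/(n:ℝ))))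
      ((lineP (a', 0 + (k:ℝ)*(1/(n:ℝ))) (a', 0 + ((k:ℝ)+1)*(1/(n:ℝ)))).map F.continuous)) n := by
  have hnpos : (0:ℝ) < n := by exact_mod_cast hn1
  have h1n : (0:ℝ) ≤ 1/(n:ℝ) := by positivity
  -- coordinates
  set ck : ℕ → ℝ := fun k => 0 + (k:ℝ)*(1/(n:ℝ)) with hck
  set ck' : ℕ → ℝ := fun k => 0 + ((k:ℝ)+1)*(1/(n:ℝ)) with hck'
  have hcc : ∀ k, ck k ≤ ck' k := by
    intro k; simp only [hck, hck']
    nlinarith [h1n]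
  set K : ℕ → Set (ℝ × ℝ) := fun k => Set.Icc a a' ×ˢ Set.Icc (ck k) (ck' k) with hK
  have hKcvx : ∀ k, Convex ℝ (K k) := fun k => (convex_Icc _ _).prod (convex_Icc _ _)
  have mbl : ∀ k, (a, ck k) ∈ K k := fun k => ⟨Set.left_mem_Icc.2 ha, Set.left_mem_Icc.2 (hcc k)⟩
  have mtl : ∀ k, (a', ck k) ∈ K k := fun k => ⟨Set.right_mem_Icc.2 ha, Set.left_mem_Icc.2 (hcc k)⟩
  have mbr : ∀ k, (a, ck' k) ∈ K k := fun k => ⟨Set.left_mem_Icc.2 ha, Set.right_mem_Icc.2 (hcc k)⟩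
  have mtr : ∀ k, (a', ck' k) ∈ K k := fun k => ⟨Set.right_mem_Icc.2 ha, Set.right_mem_Icc.2 (hcc k)⟩
  -- edges
  set Vl : ∀ k : ℕ, Path (F (a, ck k)) (F (a', ck k)) :=
    fun k => (lineP ((a, ck k) : ℝ × ℝ) (a', ck k)).map F.continuous with hVl
  set Vr : ∀ k : ℕ, Path (F (a, ck' k)) (F (a', ck' k)) :=
    fun k => (lineP ((a, ck' k) : ℝ × ℝ) (a', ck' k)).map F.continuous with hVr
  set B : ∀ k : ℕ, Path (F (a, ck k)) (F (a, ck' k)) :=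
    fun k => (lineP ((a, ck k) : ℝ × ℝ) (a, ck' k)).map F.continuous with hB
  set T : ∀ k : ℕ, Path (F (a', ck k)) (F (a', ck' k)) :=
    fun k => (lineP ((a', ck k) : ℝ × ℝ) (a', ck' k)).map F.continuous with hT
  -- group elements
  set A : ℕ → G := fun k => φ (cc k) _ _ (Vl k) with hA
  set A' : ℕ → G := fun k => φ (cc k) _ _ (Vr k) with hA'
  apply prodG_telescope hn1 (A := A) (A' := A')
  · -- square relation
    intro k hk
    have hKUk := hKU k hk
    have rVl : Set.range ⇑(Vl k) ⊆ U (cc k) :=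
      (map_lineP_range F (hKcvx k) (mbl k) (mtl k)).trans hKUk
    have rVr : Set.range ⇑(Vr k) ⊆ U (cc k) :=
      (map_lineP_range F (hKcvx k) (mbr k) (mtr k)).trans hKUk
    have rB : Set.range ⇑(B k) ⊆ U (cc k) :=
      (map_lineP_range F (hKcvx k) (mbl k) (mbr k)).trans hKUk
    have rT : Set.range ⇑(T k) ⊆ U (cc k) :=
      (map_lineP_range F (hKcvx k) (mtl k) (mtr k)).trans hKUk
    have rVrs : Set.range ⇑(Vr k).symm ⊆ U (cc k) := by rw [Path.symm_range]; exact rVr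
    have rTVrs : Set.range ⇑((T k).trans (Vr k).symm) ⊆ U (cc k) := by
      rw [Path.trans_range]; exact Set.union_subset rT rVrs
    have rComp : Set.range ⇑((Vl k).trans ((T k).trans (Vr k).symm)) ⊆ U (cc k) := by
      rw [Path.trans_range]; exact Set.union_subset rVl rTVrs
    -- homotopy within the square
    have htpK : HomotopicIn (F '' K k) (B k) ((Vl k).trans ((T k).trans (Vr k).symm)) := by
      apply homotopicIn_comp F (hKcvx k)
        (lineP ((a, ck k) : ℝ × ℝ) (a, ck' k))
        ((lineP ((a, ck k) : ℝ × ℝ) (a', ck k)).trans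
          ((lineP ((a', ck k) : ℝ × ℝ) (a', ck' k)).trans
            (lineP ((a, ck' k) : ℝ × ℝ) (a', ck' k)).symm))
        (fun u => lineP_mem (hKcvx k) (mbl k) (mbr k) u)
        (path_trans_mem (fun u => lineP_mem (hKcvx k) (mbl k) (mtl k) u)
          (path_trans_mem (fun u => lineP_mem (hKcvx k) (mtl k) (mtr k) u)
            (path_symm_mem (fun u => lineP_mem (hKcvx k) (mbr k) (mtr k) u))))
        _ _ (fun _ => rfl)
        (trans_comp _ _ _ _ F (fun _ => rfl)
          (trans_comp _ _ _ _ F (fun _ => rfl)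
            (symm_comp _ _ F (fun _ => rfl))))
    have h1 : φ (cc k) _ _ (B k) = φ (cc k) _ _ ((Vl k).trans ((T k).trans (Vr k).symm)) :=
      hh _ _ _ _ _ rB rComp (htpK.mono hKUk)
    rw [h1, hm _ _ _ _ _ _ rVl rTVrs, hm _ _ _ _ _ _ rT rVrs,
      phi_symm hm hh _ _ rVr, ← mul_assoc]
  · -- compatibility between adjacent squares
    intro k hk1
    show φ (cc k) _ _ (Vr k) = φ (cc (k+1)) _ _ (Vl (k+1))
    have hckk : ck (k+1) = ck' k := by
      simp only [hck, hck']
      push_cast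
      ring
    have hcompat2 : φ (cc k) _ _ (Vr k) = φ (cc (k+1)) _ _ (Vr k) := by
      apply hco
      apply Set.subset_inter
      · exact (map_lineP_range F (hKcvx k) (mbr k) (mtr k)).trans (hKU k (by omega))
      · -- Vr k is the left edge of square k+1
        refine (map_lineP_range F (hKcvx (k+1)) ?_ ?_).trans (hKU (k+1) hk1)
        · rw [← hckk]; exact mbl (k+1)
        · rw [← hckk]; exact mtl (k+1)
    rw [hcompat2]
    apply path_congr (φ (cc (k+1)))
    · rw [hckk]
    · rw [hckk]
    · intro t
      show F (lineP ((a, ck' k) : ℝ × ℝ) (a', ck' k) t) =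
        F (lineP ((a, ck (k+1)) : ℝ × ℝ) (a', ck (k+1)) t)
      rw [hckk]
  · -- left vertical edge is constant
    show φ (cc 0) _ _ (Vl 0) = 1
    have hz : F (a, (0:ℝ)) ∈ U (cc 0) := by
      apply hKU 0 (by omega)
      refine ⟨(a, ck 0), mbl 0, ?_⟩
      congr 1
      simp only [hck]
      push_cast
      ring
    apply phi_const hm hh _ _ hz
    intro u
    show F (lineP ((a, ck 0) : ℝ × ℝ) (a', ck 0) u) = F (a, (0:ℝ))
    rw [show lineP ((a, ck 0) : ℝ × ℝ) (a', ck 0) u =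
      ((1 - (u:ℝ)) * a + (u:ℝ) * a', ck 0) from Prod.ext rfl (by
        show (1 - (u:ℝ)) * ck 0 + (u:ℝ) * ck 0 = ck 0
        ring)]
    rw [show ck 0 = (0:ℝ) by simp [hck]]
    rw [hc0]
  · -- right vertical edge is constant
    show φ (cc (n-1)) _ _ (Vr (n-1)) = 1
    have hck1 : ck' (n-1) = 1 := by
      simp only [hck']
      rw [Nat.cast_sub hn1]
      push_cast
      field_simp
      ring
    have hz : F (a, (1:ℝ)) ∈ U (cc (n-1)) := by
      apply hKU (n-1) (by omega)
      refine ⟨(a, ck' (n-1)), mbr (n-1), ?_⟩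
      rw [hck1]
    apply phi_const hm hh _ _ hz
    intro u
    show F (lineP ((a, ck' (n-1)) : ℝ × ℝ) (a', ck' (n-1)) u) = F (a, (1:ℝ))
    rw [show lineP ((a, ck' (n-1)) : ℝ × ℝ) (a', ck' (n-1)) u =
      ((1 - (u:ℝ)) * a + (u:ℝ) * a', ck' (n-1)) from Prod.ext rfl (by
        show (1 - (u:ℝ)) * ck' (n-1) + (u:ℝ) * ck' (n-1) = ck' (n-1)
        ring)]
    rw [hck1, hc1]
end rowstep
section hinv
variable {X : Type*} [TopologicalSpace X] {G : Type*} [Group G] {ι : Type*}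
variable {U : ι → Set X} {φ : (i : ι) → (x y : X) → Path x y → G}

set_option maxHeartbeats 2000000 in
theorem PhiDef_homotopic (hh : VKHom U φ) (hm : VKMul U φ) (hco : VKCompat U φ)
    (hopen : ∀ i, IsOpen (U i)) (hcover : ∀ z : X, ∃ i, z ∈ U i)
    {x y : X} (γ γ' : Path x y) (htp : γ.Homotopic γ') :
    PhiDef U φ hopen hcover x y γ = PhiDef U φ hopen hcover x y γ' := by
  obtain ⟨H⟩ := htp
  obtain ⟨n, hn1, c, hgrid⟩ := exists_goodGrid hopen hcover H
  have hnpos : (0:ℝ) < n := by exact_mod_cast hn1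
  have h1n : (0:ℝ) ≤ 1/(n:ℝ) := by positivity
  set F := HHmap H with hF
  set r : ℕ → Path x y :=
    fun j => H.eval (Set.projIcc 0 1 zero_le_one ((j:ℝ)*(1/(n:ℝ)))) with hr
  have hrext : ∀ (j : ℕ) (t : ℝ), (r j).extend t = F ((j:ℝ)*(1/(n:ℝ)), t) := fun j t => rfl
  have hp0 : Set.projIcc (0:ℝ) 1 zero_le_one 0 = 0 := by
    apply Subtype.ext
    simp [Set.projIcc]
  have hp1 : Set.projIcc (0:ℝ) 1 zero_le_one 1 = 1 := by
    apply Subtype.ext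
    simp [Set.projIcc]
  -- rows adapted to cover
  have hrowgood : ∀ j jj : ℕ, jj < n →
      ((j:ℝ)*(1/(n:ℝ))) ∈ Set.Icc ((jj:ℝ)*(1/(n:ℝ))) (((jj:ℝ)+1)*(1/(n:ℝ))) →
      GoodChain U (r j) 0 (1/(n:ℝ)) n (fun k => c jj k) := by
    intro j jj hjj hmem k hk
    rintro _ ⟨t, ht, rfl⟩
    rw [hrext]
    exact hgrid jj k hjj hk ⟨((j:ℝ)*(1/(n:ℝ)), t), ⟨hmem, ht⟩, rfl⟩
  -- single row step
  have hstep : ∀ j, j + 1 ≤ n → PhiDef U φ hopen hcover x y (r j) =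
      PhiDef U φ hopen hcover x y (r (j+1)) := by
    intro j hj
    have ecast : ((j+1:ℕ):ℝ) = (j:ℝ)+1 := by push_cast; ring
    have haj : (j:ℝ)*(1/(n:ℝ)) ≤ ((j+1:ℕ):ℝ)*(1/(n:ℝ)) := by
      rw [ecast]; nlinarith
    have hjIcc : (j:ℝ)*(1/(n:ℝ)) ∈
        Set.Icc ((j:ℝ)*(1/(n:ℝ))) (((j:ℝ)+1)*(1/(n:ℝ))) :=
      Set.left_mem_Icc.2 (by nlinarith)
    have hj1Icc : ((j+1:ℕ):ℝ)*(1/(n:ℝ)) ∈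
        Set.Icc ((j:ℝ)*(1/(n:ℝ))) (((j:ℝ)+1)*(1/(n:ℝ))) := by
      rw [ecast]
      exact Set.right_mem_Icc.2 (by nlinarith)
    have good_j : GoodChain U (r j) 0 (1/(n:ℝ)) n (fun k => c j k) :=
      hrowgood j j (by omega) hjIcc
    have good_j1 : GoodChain U (r (j+1)) 0 (1/(n:ℝ)) n (fun k => c j k) :=
      hrowgood (j+1) j (by omega) hj1Icc
    rw [PhiDef_spec hh hm hco hopen hcover (r j) hn1 good_j,
      PhiDef_spec hh hm hco hopen hcover (r (j+1)) hn1 good_j1]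
    unfold chainVal
    have hKUrow : ∀ k, k < n → F '' (Set.Icc ((j:ℝ)*(1/(n:ℝ))) (((j+1:ℕ):ℝ)*(1/(n:ℝ))) ×ˢ
        Set.Icc (0 + (k:ℝ)*(1/(n:ℝ))) (0 + ((k:ℝ)+1)*(1/(n:ℝ)))) ⊆ U (c j k) := by
      intro k hk
      have := hgrid j k (by omega) hk
      rwa [show ((j:ℝ)+1) = ((j+1:ℕ):ℝ) from ecast.symm] at this
    have hc0 : ∀ s : ℝ, F (s, (0:ℝ)) = F ((j:ℝ)*(1/(n:ℝ)), (0:ℝ)) := by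
      intro s
      show H (_, Set.projIcc (0:ℝ) 1 zero_le_one 0) = H (_, Set.projIcc (0:ℝ) 1 zero_le_one 0)
      rw [hp0, Path.Homotopy.source, Path.Homotopy.source]
    have hc1 : ∀ s : ℝ, F (s, (1:ℝ)) = F ((j:ℝ)*(1/(n:ℝ)), (1:ℝ)) := by
      intro s
      show H (_, Set.projIcc (0:ℝ) 1 zero_le_one 1) = H (_, Set.projIcc (0:ℝ) 1 zero_le_one 1)
      rw [hp1, Path.Homotopy.target, Path.Homotopy.target]
    have main := row_step hh hm hco F hn1 haj (fun k => c j k) hKUrow hc0 hc1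
    have lhs_eq : prodG (fun k => φ (c j k) ((r j).extend (0 + (k:ℝ)*(1/(n:ℝ))))
        ((r j).extend (0 + ((k:ℝ)+1)*(1/(n:ℝ))))
        (seg (r j) (0 + (k:ℝ)*(1/(n:ℝ))) (0 + ((k:ℝ)+1)*(1/(n:ℝ))))) n =
        prodG (fun k => φ (c j k) (F ((j:ℝ)*(1/(n:ℝ)), 0 + (k:ℝ)*(1/(n:ℝ))))
          (F ((j:ℝ)*(1/(n:ℝ)), 0 + ((k:ℝ)+1)*(1/(n:ℝ))))
          ((lineP (((j:ℝ)*(1/(n:ℝ)), 0 + (k:ℝ)*(1/(n:ℝ))) : ℝ × ℝ)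
            ((j:ℝ)*(1/(n:ℝ)), 0 + ((k:ℝ)+1)*(1/(n:ℝ)))).map F.continuous)) n := by
      apply prodG_congr
      intro k hk
      apply path_congr (φ (c j k))
      · exact hrext j _
      · exact hrext j _
      · intro u
        rw [seg_apply, hrext j, map_lineP_apply]
        congr 1
        exact Prod.ext (by show _ = (1-(u:ℝ)) * ((j:ℝ)*(1/(n:ℝ))) + (u:ℝ) * ((j:ℝ)*(1/(n:ℝ))); ring) rfl
    have rhs_eq : prodG (fun k => φ (c j k) ((r (j+1)).extend (0 + (k:ℝ)*(1/(n:ℝ))))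
        ((r (j+1)).extend (0 + ((k:ℝ)+1)*(1/(n:ℝ))))
        (seg (r (j+1)) (0 + (k:ℝ)*(1/(n:ℝ))) (0 + ((k:ℝ)+1)*(1/(n:ℝ))))) n =
        prodG (fun k => φ (c j k) (F (((j+1:ℕ):ℝ)*(1/(n:ℝ)), 0 + (k:ℝ)*(1/(n:ℝ))))
          (F (((j+1:ℕ):ℝ)*(1/(n:ℝ)), 0 + ((k:ℝ)+1)*(1/(n:ℝ))))
          ((lineP ((((j+1:ℕ):ℝ)*(1/(n:ℝ)), 0 + (k:ℝ)*(1/(n:ℝ))) : ℝ × ℝ)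
            (((j+1:ℕ):ℝ)*(1/(n:ℝ)), 0 + ((k:ℝ)+1)*(1/(n:ℝ)))).map F.continuous)) n := by
      apply prodG_congr
      intro k hk
      apply path_congr (φ (c j k))
      · exact hrext (j+1) _
      · exact hrext (j+1) _
      · intro u
        rw [seg_apply, hrext (j+1), map_lineP_apply]
        congr 1
        exact Prod.ext (by
          show _ = (1-(u:ℝ)) * (((j+1:ℕ):ℝ)*(1/(n:ℝ))) + (u:ℝ) * (((j+1:ℕ):ℝ)*(1/(n:ℝ)))
          ring) rfl
    exact lhs_eq.trans (main.trans rhs_eq.symm)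
  -- induct over rows
  have hmain : ∀ j, j ≤ n → PhiDef U φ hopen hcover x y (r 0) =
      PhiDef U φ hopen hcover x y (r j) := by
    intro j
    induction j with
    | zero => intro _; rfl
    | succ j ih => intro hj; rw [ih (by omega), hstep j hj]
  have h0 : r 0 = γ := by
    show H.eval _ = γ
    rw [show Set.projIcc (0:ℝ) 1 zero_le_one (((0:ℕ):ℝ)*(1/(n:ℝ))) = 0 from Subtype.ext (by
      simp [Set.projIcc])]
    exact H.eval_zero
  have hlast : r n = γ' := by
    show H.eval _ = γ'
    rw [show Set.projIcc (0:ℝ) 1 zero_le_one (((n:ℕ):ℝ)*(1/(n:ℝ))) = 1 from Subtype.ext (by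
      rw [Set.projIcc_of_mem]
      · show (n:ℝ)*(1/(n:ℝ)) = ((1 : unitInterval) : ℝ)
        field_simp
        rfl
      · constructor
        · positivity
        · rw [mul_one_div, div_le_one hnpos])]
    exact H.eval_one
  calc PhiDef U φ hopen hcover x y γ = PhiDef U φ hopen hcover x y (r 0) := by rw [h0]
  _ = PhiDef U φ hopen hcover x y (r n) := hmain n le_rfl
  _ = PhiDef U φ hopen hcover x y γ' := by rw [hlast]
end hinv
section uniq
variable {X : Type*} [TopologicalSpace X] {G : Type*} [Group G] {ι : Type*}
variable {U : ι → Set X} {φ : (i : ι) → (x y : X) → Path x y → G}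

theorem psi_refl (Ψ : ∀ x y : X, Path x y → G)
    (hΨm : ∀ (x y z : X) (γ : Path x y) (μ : Path y z),
      Ψ x z (γ.trans μ) = Ψ x y γ * Ψ y z μ) (z : X) :
    Ψ z z (Path.refl z) = 1 := by
  have h := hΨm z z z (Path.refl z) (Path.refl z)
  rw [Path.refl_trans_refl] at h
  exact mul_left_cancel (a := Ψ z z (Path.refl z)) (by rw [mul_one]; exact h.symm)

set_option maxHeartbeats 1000000 in
theorem psi_chain (Ψ : ∀ x y : X, Path x y → G)
    (hΨh : ∀ (x y : X) (γ γ' : Path x y), γ.Homotopic γ' → Ψ x y γ = Ψ x y γ')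
    (hΨm : ∀ (x y z : X) (γ : Path x y) (μ : Path y z),
      Ψ x z (γ.trans μ) = Ψ x y γ * Ψ y z μ)
    {x y : X} (γ : Path x y) (a δ : ℝ) (hδ : 0 ≤ δ) :
    ∀ m : ℕ, Ψ _ _ (seg γ a (a + (m:ℝ)*δ)) =
      prodG (fun k => Ψ _ _ (seg γ (a + (k:ℝ)*δ) (a + ((k:ℝ)+1)*δ))) m := by
  intro m
  induction m with
  | zero =>
    show Ψ _ _ (seg γ a (a + ((0:ℕ):ℝ)*δ)) = 1
    have h1 : Ψ _ _ (seg γ a (a + ((0:ℕ):ℝ)*δ)) = Ψ _ _ (Path.refl (γ.extend a)) := by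
      apply path_congr Ψ rfl (by push_cast; ring_nf)
      intro t
      rw [seg_apply]
      show γ.extend ((1 - (t:ℝ)) * a + (t:ℝ) * (a + ((0:ℕ):ℝ)*δ)) = γ.extend a
      congr 1
      push_cast
      ring
    rw [h1, psi_refl Ψ hΨm]
  | succ m ih =>
    have hcast : ((m + 1 : ℕ) : ℝ) = (m : ℝ) + 1 := by push_cast; ring
    rw [hcast]
    have hle1 : a + (m : ℝ) * δ ≤ a + ((m : ℝ) + 1) * δ := by nlinarith
    have hle0 : a ≤ a + (m : ℝ) * δ := by nlinarith
    have hmemL : a ∈ Set.Icc a (a + ((m : ℝ) + 1) * δ) := Set.left_mem_Icc.2 (hle0.trans hle1)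
    have hmemM : a + (m : ℝ) * δ ∈ Set.Icc a (a + ((m : ℝ) + 1) * δ) := ⟨hle0, hle1⟩
    have hmemR : a + ((m : ℝ) + 1) * δ ∈ Set.Icc a (a + ((m : ℝ) + 1) * δ) :=
      Set.right_mem_Icc.2 (hle0.trans hle1)
    have htp : HomotopicIn (γ.extend '' Set.Icc a (a + ((m : ℝ) + 1) * δ))
        (seg γ a (a + ((m : ℝ) + 1) * δ))
        ((seg γ a (a + (m : ℝ) * δ)).trans (seg γ (a + (m : ℝ) * δ) (a + ((m : ℝ) + 1) * δ))) := by
      apply homotopicIn_comp (GG γ) (convex_Icc a (a + ((m : ℝ) + 1) * δ))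
        (lineP a (a + ((m : ℝ) + 1) * δ))
        ((lineP a (a + (m : ℝ) * δ)).trans (lineP (a + (m : ℝ) * δ) (a + ((m : ℝ) + 1) * δ)))
        (fun t => lineP_mem (convex_Icc _ _) hmemL hmemR t)
        (path_trans_mem (fun t => lineP_mem (convex_Icc _ _) hmemL hmemM t)
          (fun t => lineP_mem (convex_Icc _ _) hmemM hmemR t))
        _ _ (seg_comp γ _ _)
        (trans_comp _ _ _ _ (GG γ) (seg_comp γ _ _) (seg_comp γ _ _))
    have h1 := hΨh _ _ _ _ htp.homotopic
    rw [h1, hΨm, ih, prodG]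

set_option maxHeartbeats 1000000 in
theorem psi_eq_PhiDef (hh : VKHom U φ) (hm : VKMul U φ) (hco : VKCompat U φ)
    (hopen : ∀ i, IsOpen (U i)) (hcover : ∀ z : X, ∃ i, z ∈ U i)
    (Ψ : ∀ x y : X, Path x y → G)
    (hΨh : ∀ (x y : X) (γ γ' : Path x y), γ.Homotopic γ' → Ψ x y γ = Ψ x y γ')
    (hΨm : ∀ (x y z : X) (γ : Path x y) (μ : Path y z),
      Ψ x z (γ.trans μ) = Ψ x y γ * Ψ y z μ)
    (hΨe : ∀ i, ∀ (x y : X) (γ : Path x y), Set.range ⇑γ ⊆ U i → Ψ x y γ = φ i x y γ)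
    {x y : X} (γ : Path x y) :
    Ψ x y γ = PhiDef U φ hopen hcover x y γ := by
  obtain ⟨n, hn1, c, hc⟩ := exists_goodChain hopen hcover γ
  have hnpos : (0:ℝ) < n := by exact_mod_cast hn1
  have h1n : (0:ℝ) ≤ 1/(n:ℝ) := by positivity
  rw [PhiDef_spec hh hm hco hopen hcover γ hn1 hc]
  have h1 : Ψ x y γ = Ψ _ _ (seg γ 0 (0 + (n:ℝ)*(1/(n:ℝ)))) := by
    apply path_congr Ψ
    · exact γ.extend_zero.symm
    · rw [show (0:ℝ) + (n:ℝ)*(1/(n:ℝ)) = 1 by field_simp; ring]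
      exact γ.extend_one.symm
    · intro t
      rw [seg_apply]
      rw [show (1 - (t:ℝ)) * 0 + (t:ℝ) * (0 + (n:ℝ)*(1/(n:ℝ))) = (t:ℝ) by field_simp; ring]
      rw [Path.extend_apply γ t.2, Subtype.coe_eta]
  have h2 := psi_chain Ψ hΨh hΨm γ 0 (1/(n:ℝ)) h1n n
  rw [h1, h2]
  unfold chainVal
  apply prodG_congr
  intro k hk
  exact hΨe (c k) _ _ _ ((seg_range_subset γ h1n k).trans (hc k hk))
end uniq
end VKAux

/-- **A van Kampen type theorem for group-valued homomorphisms on the fundamental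
groupoid.** Given an open cover `U i` of `X` and compatible `G`-valued homomorphisms
`φ i` on the fundamental groupoids of the `U i`, there is a unique `G`-valued
homomorphism `Φ` on the fundamental groupoid of `X` extending all the `φ i`. -/
theorem exists_unique_groupoid_homomorphism_extending_cover
    {X : Type*} [TopologicalSpace X] {G : Type*} [Group G]
    {I : Type*} (U : I → Set X)
    (hopen : ∀ i, IsOpen (U i)) (hcover : ∀ x : X, ∃ i, x ∈ U i)
    (φ : (i : I) → (x y : X) → Path x y → G)
    (hhom : ∀ i, ∀ (x y : X) (γ γ' : Path x y), Set.range ⇑γ ⊆ U i →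
      Set.range ⇑γ' ⊆ U i → HomotopicIn (U i) γ γ' → φ i x y γ = φ i x y γ')
    (hmul : ∀ i, ∀ (x y z : X) (γ : Path x y) (μ : Path y z), Set.range ⇑γ ⊆ U i →
      Set.range ⇑μ ⊆ U i → φ i x z (γ.trans μ) = φ i x y γ * φ i y z μ)
    (hcompat : ∀ i j, ∀ (x y : X) (γ : Path x y), Set.range ⇑γ ⊆ U i ∩ U j →
      φ i x y γ = φ j x y γ) :
    ∃! Φ : (x y : X) → Path x y → G,
      (∀ (x y : X) (γ γ' : Path x y), γ.Homotopic γ' → Φ x y γ = Φ x y γ') ∧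
      (∀ (x y z : X) (γ : Path x y) (μ : Path y z),
        Φ x z (γ.trans μ) = Φ x y γ * Φ y z μ) ∧
      (∀ i, ∀ (x y : X) (γ : Path x y), Set.range ⇑γ ⊆ U i → Φ x y γ = φ i x y γ) := by
  have hh : VKHom U φ := hhom
  have hm : VKMul U φ := hmul
  have hco : VKCompat U φ := hcompat
  refine ⟨PhiDef U φ hopen hcover, ⟨?_, ?_, ?_⟩, ?_⟩
  · intro x y γ γ' h
    exact PhiDef_homotopic hh hm hco hopen hcover γ γ' h
  · intro x y z γ μ
    exact PhiDef_mul hh hm hco hopen hcover γ μ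
  · intro i x y γ hγ
    exact PhiDef_extends hh hm hco hopen hcover i γ hγ
  · rintro Ψ ⟨h1, h2, h3⟩
    funext x y γ
    exact psi_eq_PhiDef hh hm hco hopen hcover Ψ h1 h2 h3 γ
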